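/- arXiv:1308.0509 — 4 statements merged into one kernel-verified Lean document; each statement's English description precedes it below -/
import Mathlib

section
/- Fix b > 0. Let c : [0,b] → ℝ be continuous with c(z) > 0 for all z ∈ [0,b], and let H : [0,b] → ℝ be continuous. For a Borel measurable control l : [0,∞) → [0,b] define J(l) = ∫_0^∞ exp(−∫_0^m c(l(u)) du) · H(l(m)) dm. Then the supremum of J over all measurable controls equals max_{z ∈ [0,b]} H(z)/c(z), and it is attained by the constant control l ≡ z*, where z* is any maximizer of z ↦ H(z)/c(z) on [0,b]. -/
open MeasureTheory Set Real

private lemma aux_intervalIntegrable {g : ℝ → ℝ} (hg : Measurable g) {Cg : ℝ}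
    (hub : ∀ u, |g u| ≤ Cg) (a₁ a₂ : ℝ) : IntervalIntegrable g volume a₁ a₂ := by
  rw [intervalIntegrable_iff]
  apply Measure.integrableOn_of_bounded (M := Cg) _ hg.aestronglyMeasurable
  · filter_upwards with u using by simpa [Real.norm_eq_abs] using hub u
  · exact measure_Ioc_lt_top.ne

/-- The key identity: if `g` is measurable with `0 < ε ≤ g ≤ Cg`, then
`∫₀^∞ g(m) exp(-∫₀^m g) dm = 1`. -/
private lemma aux_key {g : ℝ → ℝ} (hg : Measurable g) {ε Cg : ℝ} (hε : 0 < ε)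
    (hlb : ∀ u, ε ≤ g u) (hub : ∀ u, g u ≤ Cg) :
    ∫ m in Set.Ioi (0:ℝ), g m * Real.exp (-(∫ u in (0:ℝ)..m, g u)) = 1 := by
  have hCg : 0 < Cg := lt_of_lt_of_le hε (le_trans (hlb 0) (hub 0))
  have habs : ∀ u, |g u| ≤ Cg := fun u => abs_le.2 ⟨by nlinarith [hlb u], hub u⟩
  have hgint : ∀ a₁ a₂ : ℝ, IntervalIntegrable g volume a₁ a₂ :=
    aux_intervalIntegrable hg habs
  set A : ℝ → ℝ := fun m => ∫ u in (0:ℝ)..m, g u with hA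
  have hAcont : Continuous A := intervalIntegral.continuous_primitive hgint 0
  have hAmeas : Measurable A := hAcont.measurable
  have hAdiff : ∀ p q : ℝ, p ≤ q → ε * (q - p) ≤ A q - A p := by
    intro p q hpq
    have hsplit : A p + ∫ u in p..q, g u = A q :=
      intervalIntegral.integral_add_adjacent_intervals (hgint 0 p) (hgint p q)
    have h2 : ε * (q - p) ≤ ∫ u in p..q, g u := by
      have := intervalIntegral.integral_mono_on hpq (intervalIntegrable_const (c := ε))
        (hgint p q) (fun x _ => hlb x)
      simpa [smul_eq_mul, mul_comm] using this
    linarith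
  have hA0 : A 0 = 0 := intervalIntegral.integral_same
  have hAnn : ∀ m : ℝ, 0 ≤ m → ε * m ≤ A m := fun m hm => by
    simpa [hA0] using hAdiff 0 m hm
  have hAlt : ∀ p q : ℝ, p < q → A p < A q := fun p q h => by
    nlinarith [hAdiff p q h.le]
  have hAmono : ∀ p q : ℝ, p ≤ q → A p ≤ A q := fun p q h => by
    nlinarith [hAdiff p q h]
  -- existence of the "inverse" of A
  have hexist : ∀ t : ℝ, 0 < t → ∃ s : ℝ, 0 < s ∧ A s = t := by
    intro t ht
    set T : ℝ := t / ε + 1 with hT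
    have hT0 : (0:ℝ) ≤ T := by positivity
    have hAT : t < A T := by
      have h1 : ε * T ≤ A T := hAnn T hT0
      have h2 : ε * T = t + ε := by rw [hT, mul_add, mul_one, mul_div_cancel₀ _ hε.ne']
      linarith
    have := intermediate_value_Ioo hT0 hAcont.continuousOn
      (show t ∈ Ioo (A 0) (A T) from ⟨by rw [hA0]; exact ht, hAT⟩)
    obtain ⟨s, hs, hAs⟩ := this
    exact ⟨s, hs.1, hAs⟩
  -- the integrand
  set K : ℝ → ℝ := fun m => g m * Real.exp (-(A m)) with hK
  have hKmeas : Measurable K := hg.mul (Real.measurable_exp.comp hAmeas.neg)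
  have hKnn : ∀ m, 0 ≤ K m := fun m =>
    mul_nonneg (le_trans hε.le (hlb m)) (Real.exp_pos _).le
  have hKint : IntegrableOn K (Set.Ioi (0:ℝ)) := by
    apply Integrable.mono' (((exp_neg_integrableOn_Ioi 0 hε)).const_mul Cg)
      hKmeas.aestronglyMeasurable
    filter_upwards [ae_restrict_mem measurableSet_Ioi] with m hm
    have h1 : ε * m ≤ A m := hAnn m (le_of_lt hm)
    have h2 : Real.exp (-(A m)) ≤ Real.exp (-ε * m) := by
      apply Real.exp_le_exp.2; linarith
    rw [Real.norm_eq_abs, abs_of_nonneg (hKnn m)]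
    exact mul_le_mul (hub m) h2 (Real.exp_pos _).le hCg.le
  -- lintegral of exp over Ioi s
  have hexpint : ∀ s : ℝ, IntegrableOn (fun t : ℝ => Real.exp (-t)) (Set.Ioi s) := by
    intro s
    have := exp_neg_integrableOn_Ioi s one_pos
    simpa using this
  have hexpl : ∀ s : ℝ, 0 ≤ s →
      (∫⁻ t in Set.Ioi (0:ℝ),
        (Set.Ioi s).indicator (fun t => ENNReal.ofReal (Real.exp (-t))) t)
        = ENNReal.ofReal (Real.exp (-s)) := by
    intro s hs
    rw [lintegral_indicator measurableSet_Ioi,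
      Measure.restrict_restrict measurableSet_Ioi,
      Set.inter_eq_left.2 (Set.Ioi_subset_Ioi hs),
      ← ofReal_integral_eq_lintegral_ofReal (hexpint s)
        (Filter.Eventually.of_forall fun t => (Real.exp_pos _).le),
      integral_exp_neg_Ioi]
  -- the double integral
  have step1 : (∫⁻ m in Set.Ioi (0:ℝ), ENNReal.ofReal (K m))
      = ∫⁻ m in Set.Ioi (0:ℝ), ∫⁻ t in Set.Ioi (0:ℝ),
          (if A m < t then ENNReal.ofReal (g m) * ENNReal.ofReal (Real.exp (-t)) else 0) := by
    apply setLIntegral_congr_fun measurableSet_Ioi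
    intro m hm
    have hAm : 0 ≤ A m := le_trans (mul_nonneg hε.le (le_of_lt hm)) (hAnn m (le_of_lt hm))
    rw [hK]
    simp only []
    rw [ENNReal.ofReal_mul (le_trans hε.le (hlb m)), ← hexpl (A m) hAm,
      ← lintegral_const_mul' _ _ ENNReal.ofReal_ne_top]
    congr 1
    funext t
    by_cases h : A m < t <;> simp [Set.indicator_apply, Set.mem_Ioi, h]
  have hfmeas : Measurable (Function.uncurry fun (m t : ℝ) =>
      (if A m < t then ENNReal.ofReal (g m) * ENNReal.ofReal (Real.exp (-t)) else 0)) := by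
    have hset : MeasurableSet {p : ℝ × ℝ | A p.1 < p.2} :=
      measurableSet_lt (hAmeas.comp measurable_fst) measurable_snd
    exact Measurable.ite hset
      (((hg.comp measurable_fst).ennreal_ofReal).mul
        ((Real.measurable_exp.comp measurable_snd.neg).ennreal_ofReal))
      measurable_const
  have step2 : (∫⁻ m in Set.Ioi (0:ℝ), ∫⁻ t in Set.Ioi (0:ℝ),
          (if A m < t then ENNReal.ofReal (g m) * ENNReal.ofReal (Real.exp (-t)) else 0))
      = ∫⁻ t in Set.Ioi (0:ℝ), ∫⁻ m in Set.Ioi (0:ℝ),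
          (if A m < t then ENNReal.ofReal (g m) * ENNReal.ofReal (Real.exp (-t)) else 0) :=
    lintegral_lintegral_swap hfmeas.aemeasurable
  have step3 : ∀ t : ℝ, 0 < t →
      (∫⁻ m in Set.Ioi (0:ℝ),
        (if A m < t then ENNReal.ofReal (g m) * ENNReal.ofReal (Real.exp (-t)) else 0))
        = ENNReal.ofReal (Real.exp (-t)) * ENNReal.ofReal t := by
    intro t ht
    obtain ⟨s, hs0, hAs⟩ := hexist t ht
    have hiff : ∀ m : ℝ, 0 < m → (A m < t ↔ m < s) := by
      intro m _
      constructor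
      · intro h
        by_contra hc
        push_neg at hc
        exact absurd (hAs ▸ hAmono s m hc) (not_le.2 h)
      · intro h
        exact hAs ▸ hAlt m s h
    have hptwise : ∀ m, m ∈ Set.Ioi (0:ℝ) →
        (if A m < t then ENNReal.ofReal (g m) * ENNReal.ofReal (Real.exp (-t)) else 0)
          = (Set.Ioo (0:ℝ) s).indicator
              (fun m => ENNReal.ofReal (Real.exp (-t)) * ENNReal.ofReal (g m)) m := by
      intro m hm
      rw [Set.indicator_apply]
      by_cases h : A m < t
      · rw [if_pos h, if_pos ⟨hm, (hiff m hm).1 h⟩, mul_comm]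
      · rw [if_neg h, if_neg (fun hc => h ((hiff m hm).2 hc.2))]
    rw [setLIntegral_congr_fun measurableSet_Ioi hptwise,
      lintegral_indicator measurableSet_Ioo,
      Measure.restrict_restrict measurableSet_Ioo,
      Set.inter_eq_left.2 (fun x hx => hx.1),
      lintegral_const_mul' _ _ ENNReal.ofReal_ne_top]
    congr 1
    have hgOn : IntegrableOn g (Set.Ioo (0:ℝ) s) :=
      ((intervalIntegrable_iff_integrableOn_Ioc_of_le hs0.le).mp (hgint 0 s)).mono_set
        Set.Ioo_subset_Ioc_self
    rw [← ofReal_integral_eq_lintegral_ofReal hgOn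
      (Filter.Eventually.of_forall fun u => le_trans hε.le (hlb u))]
    congr 1
    rw [← integral_Ioc_eq_integral_Ioo, ← intervalIntegral.integral_of_le hs0.le]
    exact hAs
  -- the Gamma integral
  have hgamma_int : IntegrableOn (fun t : ℝ => Real.exp (-t) * t) (Set.Ioi (0:ℝ)) := by
    have := Real.GammaIntegral_convergent (by norm_num : (0:ℝ) < 2)
    have h21 : (2:ℝ) - 1 = 1 := by norm_num
    simpa [h21, Real.rpow_one] using this
  have hgamma_val : ∫ t in Set.Ioi (0:ℝ), Real.exp (-t) * t = 1 := by
    have h2 := Real.Gamma_eq_integral (by norm_num : (0:ℝ) < 2)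
    have h1 : Real.Gamma 2 = 1 := Real.Gamma_two
    have h21 : (2:ℝ) - 1 = 1 := by norm_num
    rw [h1, h21] at h2
    simp only [Real.rpow_one] at h2
    exact h2.symm
  have step4 : (∫⁻ m in Set.Ioi (0:ℝ), ENNReal.ofReal (K m)) = 1 := by
    rw [step1, step2]
    rw [setLIntegral_congr_fun measurableSet_Ioi
      (fun t (ht : t ∈ Set.Ioi (0:ℝ)) => step3 t ht)]
    have : ∀ t, t ∈ Set.Ioi (0:ℝ) →
        ENNReal.ofReal (Real.exp (-t)) * ENNReal.ofReal t
          = ENNReal.ofReal (Real.exp (-t) * t) := by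
      intro t ht
      rw [ENNReal.ofReal_mul (Real.exp_pos _).le]
    rw [setLIntegral_congr_fun measurableSet_Ioi this,
      ← ofReal_integral_eq_lintegral_ofReal hgamma_int
        (by filter_upwards [ae_restrict_mem measurableSet_Ioi] with t ht
            exact mul_nonneg (Real.exp_pos _).le (le_of_lt ht)),
      hgamma_val, ENNReal.ofReal_one]
  -- conclude
  have := integral_eq_lintegral_of_nonneg_ae
    (μ := volume.restrict (Set.Ioi (0:ℝ)))
    (Filter.Eventually.of_forall hKnn) hKmeas.aestronglyMeasurable
  rw [hK] at this ⊢
  rw [this, step4, ENNReal.toReal_one]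


/-- Integrability of `exp(-∫₀^m g) * h m` on `(0,∞)` for bounded measurable data. -/
private lemma aux_integrable {g h : ℝ → ℝ} (hg : Measurable g) (hh : Measurable h)
    {ε Cg Ch : ℝ} (hε : 0 < ε) (hlb : ∀ u, ε ≤ g u) (hgub : ∀ u, g u ≤ Cg)
    (hhub : ∀ u, |h u| ≤ Ch) :
    IntegrableOn (fun m => Real.exp (-(∫ u in (0:ℝ)..m, g u)) * h m) (Set.Ioi (0:ℝ)) := by
  have hCg : 0 < Cg := lt_of_lt_of_le hε (le_trans (hlb 0) (hgub 0))
  have habs : ∀ u, |g u| ≤ Cg := fun u => abs_le.2 ⟨by nlinarith [hlb u], hgub u⟩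
  have hgint : ∀ a₁ a₂ : ℝ, IntervalIntegrable g volume a₁ a₂ :=
    aux_intervalIntegrable hg habs
  set A : ℝ → ℝ := fun m => ∫ u in (0:ℝ)..m, g u with hA
  have hAcont : Continuous A := intervalIntegral.continuous_primitive hgint 0
  have hAmeas : Measurable A := hAcont.measurable
  have hA0 : A 0 = 0 := intervalIntegral.integral_same
  have hAnn : ∀ m : ℝ, 0 ≤ m → ε * m ≤ A m := by
    intro m hm
    have hsplit : ε * (m - 0) ≤ ∫ u in (0:ℝ)..m, g u := by
      have := intervalIntegral.integral_mono_on hm (intervalIntegrable_const (c := ε))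
        (hgint 0 m) (fun x _ => hlb x)
      simpa [smul_eq_mul, mul_comm] using this
    simpa using hsplit
  have hCh : 0 ≤ Ch := le_trans (abs_nonneg _) (hhub 0)
  apply Integrable.mono' (((exp_neg_integrableOn_Ioi 0 hε)).const_mul Ch)
    (((hAmeas.neg.exp).mul hh).aestronglyMeasurable)
  filter_upwards [ae_restrict_mem measurableSet_Ioi] with m hm
  have h1 : ε * m ≤ A m := hAnn m (le_of_lt hm)
  have h2 : Real.exp (-(A m)) ≤ Real.exp (-ε * m) := by
    apply Real.exp_le_exp.2; linarith
  simp only [Pi.mul_apply, Pi.neg_apply]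
  rw [Real.norm_eq_abs, abs_mul, abs_of_nonneg (Real.exp_pos _).le, mul_comm Ch]
  exact mul_le_mul h2 (hhub m) (abs_nonneg _) (Real.exp_pos _).le

/-- Stationary case of Proposition 3.2: the value of the deterministic control
problem `J(l) = ∫₀^∞ exp(−∫₀^m c(l(u))du) H(l(m)) dm` equals
`max_{z ∈ [0,b]} H(z)/c(z)`, attained by the constant control `l ≡ z*` for any
maximizer `z*`. -/
theorem stmt_2 (b : ℝ) (hb : 0 < b)
    (c H : ℝ → ℝ)
    (hc : ContinuousOn c (Set.Icc 0 b))
    (hcpos : ∀ z ∈ Set.Icc (0:ℝ) b, 0 < c z)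
    (hH : ContinuousOn H (Set.Icc 0 b))
    (J : (ℝ → ℝ) → ℝ)
    (hJ : ∀ l : ℝ → ℝ, J l = ∫ m in Set.Ioi (0:ℝ),
        Real.exp (-(∫ u in (0:ℝ)..m, c (l u))) * H (l m)) :
    (∃ z ∈ Set.Icc (0:ℝ) b, ∀ w ∈ Set.Icc (0:ℝ) b, H w / c w ≤ H z / c z) ∧
    (∀ z ∈ Set.Icc (0:ℝ) b, (∀ w ∈ Set.Icc (0:ℝ) b, H w / c w ≤ H z / c z) →
      (⨆ l : {l : ℝ → ℝ // Measurable l ∧ ∀ u, l u ∈ Set.Icc (0:ℝ) b}, J l.1)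
          = H z / c z
        ∧ J (fun _ => z) = H z / c z) := by
  have hIcc : IsCompact (Set.Icc (0:ℝ) b) := isCompact_Icc
  have hne : (Set.Icc (0:ℝ) b).Nonempty := ⟨0, le_refl 0, hb.le⟩
  obtain ⟨zE, hzE, hEmin⟩ := hIcc.exists_isMinOn hne hc
  set ε := c zE with hEdef
  have hEpos : 0 < ε := hcpos _ hzE
  obtain ⟨Cc, hCc⟩ := hIcc.exists_bound_of_continuousOn hc
  obtain ⟨CH, hCH⟩ := hIcc.exists_bound_of_continuousOn hH
  have hphi : ContinuousOn (fun z => H z / c z) (Set.Icc 0 b) :=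
    hH.div hc (fun z hz => (hcpos z hz).ne')
  obtain ⟨z₀, hz₀, hmax⟩ := hIcc.exists_isMaxOn hne hphi
  refine ⟨⟨z₀, hz₀, fun w hw => isMaxOn_iff.mp hmax w hw⟩, ?_⟩
  intro z hz hzmax
  set M := H z / c z with hM
  have hconstJ : J (fun _ => z) = H z / c z := by
    rw [hJ]
    have h1 : ∀ m : ℝ, (∫ u in (0:ℝ)..m, c ((fun _ : ℝ => z) u)) = c z * m := by
      intro m
      simp [intervalIntegral.integral_const, smul_eq_mul, mul_comm]
    simp only [h1]
    have h2 := integral_comp_mul_left_Ioi (fun x => Real.exp (-x) * H z) 0 (hcpos z hz)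
    simp only [mul_zero] at h2
    rw [h2, integral_mul_const, integral_exp_neg_Ioi]
    rw [smul_eq_mul, neg_zero, Real.exp_zero, one_mul, inv_mul_eq_div]
  have key : ∀ l : ℝ → ℝ, Measurable l → (∀ u, l u ∈ Set.Icc (0:ℝ) b) → J l ≤ M := by
    intro l hl hmem
    set g : ℝ → ℝ := fun u => c (l u) with hg
    set h : ℝ → ℝ := fun u => H (l u) with hh
    have hlS : Measurable (fun u => (⟨l u, hmem u⟩ : Set.Icc (0:ℝ) b)) := hl.subtype_mk
    have hgm : Measurable g := (hc.restrict.measurable).comp hlS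
    have hhm : Measurable h := (hH.restrict.measurable).comp hlS
    have hglb : ∀ u, ε ≤ g u := fun u => isMinOn_iff.mp hEmin _ (hmem u)
    have hgub : ∀ u, g u ≤ Cc := fun u =>
      le_trans (le_abs_self _) (by simpa [Real.norm_eq_abs] using hCc _ (hmem u))
    have hhub : ∀ u, |h u| ≤ CH := fun u => by
      simpa [Real.norm_eq_abs] using hCH _ (hmem u)
    have hptb : ∀ u : ℝ, h u ≤ M * g u := by
      intro u
      have h1 := hzmax (l u) (hmem u)
      exact (div_le_iff₀ (hcpos _ (hmem u))).mp h1
    set A : ℝ → ℝ := fun m => ∫ u in (0:ℝ)..m, g u with hA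
    have hFint : IntegrableOn (fun m => Real.exp (-(A m)) * h m) (Set.Ioi (0:ℝ)) :=
      aux_integrable hgm hhm hEpos hglb hgub hhub
    have habsg : ∀ u, |g u| ≤ Cc := fun u =>
      abs_le.2 ⟨by nlinarith [hglb u, hEpos, hgub u], hgub u⟩
    have hGint : IntegrableOn (fun m => Real.exp (-(A m)) * (M * g m)) (Set.Ioi (0:ℝ)) := by
      refine aux_integrable hgm (hgm.const_mul M) hEpos hglb hgub (Ch := |M| * Cc) ?_
      intro u
      rw [abs_mul]
      exact mul_le_mul_of_nonneg_left (habsg u) (abs_nonneg M)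
    have hmono : (∫ m in Set.Ioi (0:ℝ), Real.exp (-(A m)) * h m)
        ≤ ∫ m in Set.Ioi (0:ℝ), Real.exp (-(A m)) * (M * g m) := by
      apply integral_mono hFint hGint
      intro m
      exact mul_le_mul_of_nonneg_left (hptb m) (Real.exp_pos _).le
    have hval : (∫ m in Set.Ioi (0:ℝ), Real.exp (-(A m)) * (M * g m)) = M := by
      have hrw : ∀ m : ℝ, Real.exp (-(A m)) * (M * g m)
          = M * (g m * Real.exp (-(A m))) := fun m => by ring
      simp only [hrw]
      rw [integral_const_mul, aux_key hgm hEpos hglb hgub, mul_one]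
    calc J l = ∫ m in Set.Ioi (0:ℝ), Real.exp (-(A m)) * h m := hJ l
      _ ≤ ∫ m in Set.Ioi (0:ℝ), Real.exp (-(A m)) * (M * g m) := hmono
      _ = M := hval
  have hconst_mem : Measurable (fun _ : ℝ => z) ∧
      ∀ u : ℝ, (fun _ : ℝ => z) u ∈ Set.Icc (0:ℝ) b := ⟨measurable_const, fun _ => hz⟩
  haveI : Nonempty {l : ℝ → ℝ // Measurable l ∧ ∀ u, l u ∈ Set.Icc (0:ℝ) b} :=
    ⟨⟨fun _ => z, hconst_mem⟩⟩
  have hbdd : BddAbove (Set.range fun l :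
      {l : ℝ → ℝ // Measurable l ∧ ∀ u, l u ∈ Set.Icc (0:ℝ) b} => J l.1) := by
    refine ⟨M, ?_⟩
    rintro x ⟨l, rfl⟩
    exact key l.1 l.2.1 l.2.2
  refine ⟨le_antisymm (ciSup_le fun l => key l.1 l.2.1 l.2.2) ?_, hconstJ⟩
  calc (H z / c z) = J (fun _ => z) := hconstJ.symm
    _ ≤ _ := le_ciSup hbdd (⟨fun _ => z, hconst_mem⟩ :
        {l : ℝ → ℝ // Measurable l ∧ ∀ u, l u ∈ Set.Icc (0:ℝ) b})
end

section
/- Fix b > 0 and s ∈ ℝ. Let c : [0,b] → ℝ be continuous with c(z) > 0 for all z ∈ [0,b], and let F : [s,∞) × [0,b] → ℝ be bounded and Borel measurable. Then for every Borel measurable control l : [s,∞) → [0,b], ∫_s^∞ exp(−∫_s^m c(l(u)) du) · F(m, l(m)) dm ≤ sup_{m ≥ s, z ∈ [0,b]} F(m,z)/c(z). Consequently sup_l J_s(l) ≤ sup_{m ≥ s, z ∈ [0,b]} F(m,z)/c(z), where J_s(l) denotes the left-hand side. -/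
open MeasureTheory Set Real
open scoped ENNReal

/-- Key computation: for a measurable rate `g` bounded between positive constants,
the "density" `g m * exp(-∫_s^m g)` integrates to `1` over `(s, ∞)`, and the
primitive is continuous with a linear lower bound. -/
lemma key_lemma (s ε B : ℝ) (hε : 0 < ε) (g : ℝ → ℝ) (hg : Measurable g)
    (hgl : ∀ u, ε ≤ g u) (hgu : ∀ u, g u ≤ B) :
    Continuous (fun m => ∫ u in s..m, g u) ∧
    (∀ m, s ≤ m → ε * (m - s) ≤ ∫ u in s..m, g u) ∧
    IntegrableOn (fun m => g m * Real.exp (-(∫ u in s..m, g u))) (Set.Ioi s) ∧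
    (∫ m in Set.Ioi s, g m * Real.exp (-(∫ u in s..m, g u))) = 1 := by
  have hgnn : ∀ u, 0 ≤ g u := fun u => hε.le.trans (hgl u)
  have hleB : ∀ u, ‖g u‖ ≤ B := fun u => by
    rw [Real.norm_eq_abs, abs_of_nonneg (hgnn u)]; exact hgu u
  have hint : ∀ a b : ℝ, IntervalIntegrable g volume a b := by
    intro a b
    rw [intervalIntegrable_iff]
    refine Integrable.mono' ((integrableOn_const_iff enorm_ne_top).mpr (Or.inr ?_)) hg.aestronglyMeasurable
      (Filter.Eventually.of_forall hleB)
    rw [Set.uIoc]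
    exact measure_Ioc_lt_top
  set C : ℝ → ℝ := fun m => ∫ u in s..m, g u with hCdef
  have hCcont : Continuous C := intervalIntegral.continuous_primitive hint s
  have hCs0 : C s = 0 := intervalIntegral.integral_same
  have hdiff : ∀ a b : ℝ, a ≤ b → ε * (b - a) ≤ C b - C a := by
    intro a b hab
    have h1 : C b - C a = ∫ u in a..b, g u :=
      intervalIntegral.integral_interval_sub_left (hint s b) (hint s a)
    have h2 : (∫ u in a..b, (ε : ℝ)) ≤ ∫ u in a..b, g u :=
      intervalIntegral.integral_mono_on hab intervalIntegrable_const (hint a b)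
        fun u _ => hgl u
    rw [intervalIntegral.integral_const, smul_eq_mul] at h2
    rw [h1]; linarith
  have hCmono : StrictMono C := by
    intro a b hab
    have := hdiff a b hab.le
    nlinarith
  have hClB : ∀ m, s ≤ m → ε * (m - s) ≤ C m := by
    intro m hm
    have := hdiff s m hm
    linarith
  have hCm : Measurable C := hCcont.measurable
  have hf : Measurable (fun m => g m * Real.exp (-C m)) :=
    hg.mul (Real.measurable_exp.comp hCm.neg)
  have hfnn : ∀ m, 0 ≤ g m * Real.exp (-C m) := fun m =>
    mul_nonneg (hgnn m) (Real.exp_nonneg _)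
  set φ : ℝ × ℝ → ℝ≥0∞ := fun p =>
    Set.indicator {q : ℝ × ℝ | C q.1 < q.2}
      (fun q => ENNReal.ofReal (g q.1) * ENNReal.ofReal (Real.exp (-q.2))) p with hφdef
  have hTmeas : MeasurableSet {q : ℝ × ℝ | C q.1 < q.2} :=
    measurableSet_lt (hCm.comp measurable_fst) measurable_snd
  have hφmeas : Measurable φ := by
    apply Measurable.indicator _ hTmeas
    exact ((hg.comp measurable_fst).ennreal_ofReal).mul
      ((Real.measurable_exp.comp measurable_snd.neg).ennreal_ofReal)
  have stepA : ∀ m, ENNReal.ofReal (g m * Real.exp (-C m)) = ∫⁻ t, φ (m, t) := by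
    intro m
    have h1 : ∀ t, φ (m, t) = Set.indicator (Set.Ioi (C m))
        (fun t => ENNReal.ofReal (g m) * ENNReal.ofReal (Real.exp (-t))) t := by
      intro t
      simp only [hφdef, Set.indicator_apply, Set.mem_setOf_eq, Set.mem_Ioi]
    have hexpInt : IntegrableOn (fun t => Real.exp (-t)) (Set.Ioi (C m)) := by
      simpa using exp_neg_integrableOn_Ioi (C m) zero_lt_one
    calc ENNReal.ofReal (g m * Real.exp (-C m))
        = ENNReal.ofReal (g m) * ENNReal.ofReal (Real.exp (-C m)) :=
          ENNReal.ofReal_mul (hgnn m)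
      _ = ENNReal.ofReal (g m) * ∫⁻ t in Set.Ioi (C m), ENNReal.ofReal (Real.exp (-t)) := by
          rw [← ofReal_integral_eq_lintegral_ofReal hexpInt
            (Filter.Eventually.of_forall fun t => (Real.exp_pos _).le), integral_exp_neg_Ioi]
      _ = ∫⁻ t in Set.Ioi (C m), ENNReal.ofReal (g m) * ENNReal.ofReal (Real.exp (-t)) :=
          (lintegral_const_mul _ (Real.measurable_exp.comp measurable_neg).ennreal_ofReal).symm
      _ = ∫⁻ t, Set.indicator (Set.Ioi (C m))
            (fun t => ENNReal.ofReal (g m) * ENNReal.ofReal (Real.exp (-t))) t :=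
          (lintegral_indicator measurableSet_Ioi _).symm
      _ = ∫⁻ t, φ (m, t) := lintegral_congr fun t => (h1 t).symm
  have swap : (∫⁻ m in Set.Ioi s, ENNReal.ofReal (g m * Real.exp (-C m)))
      = ∫⁻ t, ∫⁻ m in Set.Ioi s, φ (m, t) := by
    rw [lintegral_congr stepA]
    exact lintegral_lintegral_swap hφmeas.aemeasurable
  have stepC : ∀ t : ℝ, (∫⁻ m in Set.Ioi s, φ (m, t))
      = Set.indicator (Set.Ioi (0 : ℝ))
          (fun t => ENNReal.ofReal (Real.exp (-t)) * ENNReal.ofReal t) t := by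
    intro t
    have hA : MeasurableSet {m : ℝ | C m < t} := measurableSet_lt hCm measurable_const
    have h1 : ∀ m, φ (m, t) = Set.indicator {m : ℝ | C m < t}
        (fun m => ENNReal.ofReal (g m) * ENNReal.ofReal (Real.exp (-t))) m := by
      intro m
      simp only [hφdef, Set.indicator_apply, Set.mem_setOf_eq]
    rw [lintegral_congr h1, lintegral_indicator hA, Measure.restrict_restrict hA]
    by_cases ht : 0 < t
    · have htε : 0 ≤ t / ε := div_nonneg ht.le hε.le
      have hsm₀ : s ≤ s + t / ε + 1 := by linarith
      have hCm₀ : t < C (s + t / ε + 1) := by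
        have h2 := hClB _ hsm₀
        have h3 : ε * (s + t / ε + 1 - s) = t + ε := by
          field_simp
          ring
        linarith
      obtain ⟨x, hxmem, hCx⟩ := intermediate_value_Icc hsm₀ hCcont.continuousOn
        (by rw [hCs0]; exact ⟨ht.le, hCm₀.le⟩)
      have hsx : s < x := by
        by_contra h
        push_neg at h
        have := hCmono.monotone h
        rw [hCs0] at this
        rw [hCx] at this
        linarith
      have hset : {m : ℝ | C m < t} ∩ Set.Ioi s = Set.Ioo s x := by
        ext m
        simp only [Set.mem_inter_iff, Set.mem_setOf_eq, Set.mem_Ioi, Set.mem_Ioo]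
        constructor
        · rintro ⟨h1', h2'⟩
          refine ⟨h2', ?_⟩
          rw [← hCx] at h1'
          exact hCmono.lt_iff_lt.mp h1'
        · rintro ⟨h1', h2'⟩
          refine ⟨?_, h1'⟩
          rw [← hCx]
          exact hCmono h2'
      have hgint : IntegrableOn g (Set.Ioo s x) :=
        Integrable.mono' ((integrableOn_const_iff enorm_ne_top).mpr (Or.inr measure_Ioo_lt_top))
          hg.aestronglyMeasurable (Filter.Eventually.of_forall hleB)
      have hval : (∫ m in Set.Ioo s x, g m) = t := by
        rw [← MeasureTheory.integral_Ioc_eq_integral_Ioo,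
          ← intervalIntegral.integral_of_le hsx.le]
        exact hCx
      rw [hset, lintegral_mul_const _ hg.ennreal_ofReal,
        ← ofReal_integral_eq_lintegral_ofReal hgint (Filter.Eventually.of_forall hgnn), hval,
        Set.indicator_of_mem (Set.mem_Ioi.mpr ht), mul_comm]
    · have hempty : {m : ℝ | C m < t} ∩ Set.Ioi s = ∅ := by
        ext m
        simp only [Set.mem_inter_iff, Set.mem_setOf_eq, Set.mem_Ioi, Set.mem_empty_iff_false,
          iff_false, not_and]
        intro h1' h2'
        have := hClB m h2'.le
        have h3 : 0 < ε * (m - s) := by nlinarith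
        push_neg at ht
        linarith
      rw [hempty, Set.indicator_of_notMem (by simpa using ht)]
      simp
  have hgammaInt : IntegrableOn (fun t => Real.exp (-t) * t) (Set.Ioi (0 : ℝ)) := by
    have h := Real.GammaIntegral_convergent (by norm_num : (0 : ℝ) < 2)
    simpa [show ((2 : ℝ) - 1) = 1 by norm_num, Real.rpow_one] using h
  have hgamma : (∫ t in Set.Ioi (0 : ℝ), Real.exp (-t) * t) = 1 := by
    have h2 : Real.Gamma 2 = ∫ t in Set.Ioi (0 : ℝ), Real.exp (-t) * t ^ ((2 : ℝ) - 1) :=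
      Real.Gamma_eq_integral (by norm_num)
    have h3 : Real.Gamma 2 = 1 := by
      rw [show (2 : ℝ) = 1 + 1 by norm_num, Real.Gamma_add_one one_ne_zero, Real.Gamma_one,
        mul_one]
    rw [← h3, h2]
    refine setIntegral_congr_fun measurableSet_Ioi fun t ht => ?_
    rw [show ((2 : ℝ) - 1) = 1 by norm_num, Real.rpow_one]
  have hI : (∫⁻ m in Set.Ioi s, ENNReal.ofReal (g m * Real.exp (-C m))) = ENNReal.ofReal 1 := by
    rw [swap, lintegral_congr stepC, lintegral_indicator measurableSet_Ioi,
      lintegral_congr fun t => (ENNReal.ofReal_mul (Real.exp_nonneg (-t))).symm,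
      ← ofReal_integral_eq_lintegral_ofReal hgammaInt
        ((ae_restrict_mem measurableSet_Ioi).mono fun t ht =>
          mul_nonneg (Real.exp_nonneg _) (le_of_lt ht)), hgamma]
  have hmeasf : AEStronglyMeasurable (fun m => g m * Real.exp (-C m))
      (volume.restrict (Set.Ioi s)) := hf.aestronglyMeasurable
  have hIntf : IntegrableOn (fun m => g m * Real.exp (-C m)) (Set.Ioi s) := by
    refine ⟨hmeasf, ?_⟩
    rw [hasFiniteIntegral_iff_ofReal (Filter.Eventually.of_forall hfnn), hI]
    exact ENNReal.ofReal_lt_top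
  have hvalf : (∫ m in Set.Ioi s, g m * Real.exp (-C m)) = 1 := by
    rw [integral_eq_lintegral_of_nonneg_ae (Filter.Eventually.of_forall hfnn) hmeasf, hI,
      ENNReal.toReal_ofReal zero_le_one]
  exact ⟨hCcont, hClB, hIntf, hvalf⟩

/-- Verification-type bound for the reduced deterministic control problem:
the discounted total reward of any control never exceeds the best instantaneous
ratio `F(m,z)/c(z)`. -/
theorem stmt_3 (b : ℝ) (hb : 0 < b) (s : ℝ)
    (c : ℝ → ℝ) (hc : ContinuousOn c (Set.Icc 0 b))
    (hcpos : ∀ z ∈ Set.Icc (0:ℝ) b, 0 < c z)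
    (F : ℝ → ℝ → ℝ) (M : ℝ)
    (hFbdd : ∀ m z, s ≤ m → z ∈ Set.Icc (0:ℝ) b → |F m z| ≤ M)
    (hFmeas : Measurable (Function.uncurry F))
    (J : (ℝ → ℝ) → ℝ)
    (hJ : ∀ l : ℝ → ℝ, J l =
      ∫ m in Set.Ioi s, Real.exp (-(∫ u in s..m, c (l u))) * F m (l m)) :
    (∀ l : ℝ → ℝ, Measurable l → (∀ u, l u ∈ Set.Icc (0:ℝ) b) →
      J l ≤ sSup {r : ℝ | ∃ m, s ≤ m ∧ ∃ z ∈ Set.Icc (0:ℝ) b, r = F m z / c z}) ∧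
    (⨆ l : {l : ℝ → ℝ // Measurable l ∧ ∀ u, l u ∈ Set.Icc (0:ℝ) b}, J l.1)
      ≤ sSup {r : ℝ | ∃ m, s ≤ m ∧ ∃ z ∈ Set.Icc (0:ℝ) b, r = F m z / c z} := by
  have hb0 : (0 : ℝ) ≤ b := hb.le
  obtain ⟨z0, hz0, hz0min⟩ := isCompact_Icc.exists_isMinOn (Set.nonempty_Icc.mpr hb0) hc
  obtain ⟨z1, hz1, hz1max⟩ := isCompact_Icc.exists_isMaxOn (Set.nonempty_Icc.mpr hb0) hc
  have hεpos : 0 < c z0 := hcpos z0 hz0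
  have hM0 : 0 ≤ M := le_trans (abs_nonneg _) (hFbdd s 0 le_rfl ⟨le_rfl, hb0⟩)
  set S := {r : ℝ | ∃ m, s ≤ m ∧ ∃ z ∈ Set.Icc (0:ℝ) b, r = F m z / c z} with hSdef
  have hSbdd : BddAbove S := by
    refine ⟨M / c z0, ?_⟩
    rintro r ⟨m, hm, z, hz, rfl⟩
    exact div_le_div₀ hM0 ((le_abs_self _).trans (hFbdd m z hm hz)) hεpos
      (isMinOn_iff.mp hz0min z hz)
  have hcrest : Continuous fun z : ℝ => c ((Set.projIcc 0 b hb0 z : Set.Icc (0:ℝ) b) : ℝ) :=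
    (continuousOn_iff_continuous_restrict.mp hc).comp continuous_projIcc
  have main : ∀ l : ℝ → ℝ, Measurable l → (∀ u, l u ∈ Set.Icc (0:ℝ) b) → J l ≤ sSup S := by
    intro l hl hlb
    have hgmeas : Measurable fun u => c (l u) := by
      have he : (fun u => c (l u))
          = fun u => c ((Set.projIcc 0 b hb0 (l u) : Set.Icc (0:ℝ) b) : ℝ) := by
        funext u
        rw [Set.projIcc_of_mem hb0 (hlb u)]
      rw [he]
      exact hcrest.measurable.comp hl
    have hglo : ∀ u, c z0 ≤ c (l u) := fun u => isMinOn_iff.mp hz0min _ (hlb u)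
    have hghi : ∀ u, c (l u) ≤ c z1 := fun u => isMaxOn_iff.mp hz1max _ (hlb u)
    obtain ⟨hCcont, hClB, hInt1, hEq1⟩ :=
      key_lemma s (c z0) (c z1) hεpos (fun u => c (l u)) hgmeas hglo hghi
    have hEq1' : (∫ m in Set.Ioi s, c (l m) * Real.exp (-(∫ u in s..m, c (l u)))) = 1 := hEq1
    have hInt1' : IntegrableOn
        (fun m => sSup S * (c (l m) * Real.exp (-(∫ u in s..m, c (l u))))) (Set.Ioi s) :=
      hInt1.const_mul _
    have hCcont' : Continuous fun m => ∫ u in s..m, c (l u) := hCcont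
    have hClB' : ∀ m, s ≤ m → c z0 * (m - s) ≤ ∫ u in s..m, c (l u) := hClB
    have hdom : IntegrableOn
        (fun m => M * Real.exp (c z0 * s) * Real.exp (-c z0 * m)) (Set.Ioi s) := by
      have h := (exp_neg_integrableOn_Ioi s hεpos).const_mul (M * Real.exp (c z0 * s))
      simpa [mul_assoc, IntegrableOn] using h
    have hfInt : IntegrableOn
        (fun m => Real.exp (-(∫ u in s..m, c (l u))) * F m (l m)) (Set.Ioi s) := by
      refine Integrable.mono' hdom ?_ ?_
      · exact ((Real.measurable_exp.comp hCcont'.measurable.neg).mul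
          (hFmeas.comp (measurable_id.prodMk hl))).aestronglyMeasurable
      · rw [ae_restrict_iff' measurableSet_Ioi]
        refine Filter.Eventually.of_forall fun m hm => ?_
        have hFb := hFbdd m (l m) (Set.mem_Ioi.mp hm).le (hlb m)
        have hCb := hClB' m (Set.mem_Ioi.mp hm).le
        have hexp : Real.exp (-(∫ u in s..m, c (l u)))
            ≤ Real.exp (c z0 * s) * Real.exp (-c z0 * m) := by
          rw [← Real.exp_add]
          exact Real.exp_le_exp.mpr (by nlinarith)
        rw [Real.norm_eq_abs, abs_mul, abs_of_nonneg (Real.exp_nonneg _)]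
        calc Real.exp (-(∫ u in s..m, c (l u))) * |F m (l m)|
            ≤ (Real.exp (c z0 * s) * Real.exp (-c z0 * m)) * M :=
              mul_le_mul hexp hFb (abs_nonneg _) (by positivity)
          _ = M * Real.exp (c z0 * s) * Real.exp (-c z0 * m) := by ring
    rw [hJ l]
    calc (∫ m in Set.Ioi s, Real.exp (-(∫ u in s..m, c (l u))) * F m (l m))
        ≤ ∫ m in Set.Ioi s, sSup S * (c (l m) * Real.exp (-(∫ u in s..m, c (l u)))) := by
          refine setIntegral_mono_on hfInt hInt1' measurableSet_Ioi fun m hm => ?_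
          have hmemS : F m (l m) / c (l m) ∈ S := by
            rw [hSdef]
            exact ⟨m, (Set.mem_Ioi.mp hm).le, l m, hlb m, rfl⟩
          have h1 : F m (l m) / c (l m) ≤ sSup S := le_csSup hSbdd hmemS
          have h2 : F m (l m) ≤ sSup S * c (l m) := (div_le_iff₀ (hcpos _ (hlb m))).mp h1
          have h3 := mul_le_mul_of_nonneg_left h2
            (Real.exp_nonneg (-(∫ u in s..m, c (l u))))
          exact h3.trans_eq (by ring)
      _ = sSup S * ∫ m in Set.Ioi s, c (l m) * Real.exp (-(∫ u in s..m, c (l u))) :=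
          integral_const_mul _ _
      _ = sSup S := by rw [hEq1', mul_one]
  refine ⟨main, ?_⟩
  haveI : Nonempty {l : ℝ → ℝ // Measurable l ∧ ∀ u, l u ∈ Set.Icc (0:ℝ) b} :=
    ⟨⟨fun _ => 0, measurable_const, fun _ => ⟨le_rfl, hb0⟩⟩⟩
  exact ciSup_le fun l => main l.1 l.2.1 l.2.2
end

section
/- Let μ ∈ ℝ, σ > 0, a > 0, ρ > 0, q > 0, and define ψ(λ) = μλ + (1/2)σ²λ² − aλ/(ρ + λ) for λ ≠ −ρ. Then the equation ψ(λ) = q has exactly three real solutions θ₁ > θ₂ > θ₃ (all different from −ρ), and they satisfy θ₁ > 0 > θ₂ > −ρ > θ₃. Moreover ψ is strictly convex on (−ρ, ∞), θ₁ = sup{λ ≥ 0 : ψ(λ) = q} (i.e. θ₁ = Φ(q)), and the derivatives at the roots satisfy ψ'(θ₁) > 0, ψ'(θ₂) < 0, and ψ'(θ₃) < 0. -/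
open Real

/-- A quadratic vanishing at three distinct points is identically zero;
hence a cubic with three distinct roots factors. -/
lemma cubic_factor (c3 c2 c1 c0 x y z : ℝ)
    (hxy : x ≠ y) (hxz : x ≠ z) (hyz : y ≠ z)
    (hx : c3*x^3 + c2*x^2 + c1*x + c0 = 0)
    (hy : c3*y^3 + c2*y^2 + c1*y + c0 = 0)
    (hz : c3*z^3 + c2*z^2 + c1*z + c0 = 0) :
    ∀ t : ℝ, c3*t^3 + c2*t^2 + c1*t + c0 = c3*(t-x)*(t-y)*(t-z) := by
  set A : ℝ := c2 + c3*(x+y+z) with hA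
  set B : ℝ := c1 - c3*(x*y+x*z+y*z) with hB
  set C : ℝ := c0 + c3*(x*y*z) with hC
  have hQx : A*x^2 + B*x + C = 0 := by rw [hA, hB, hC]; linear_combination hx
  have hQy : A*y^2 + B*y + C = 0 := by rw [hA, hB, hC]; linear_combination hy
  have hQz : A*z^2 + B*z + C = 0 := by rw [hA, hB, hC]; linear_combination hz
  have h1 : A*(x+y) + B = 0 := by
    apply mul_left_cancel₀ (sub_ne_zero.mpr hxy)
    rw [mul_zero]; linear_combination hQx - hQy
  have h2 : A*(x+z) + B = 0 := by
    apply mul_left_cancel₀ (sub_ne_zero.mpr hxz)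
    rw [mul_zero]; linear_combination hQx - hQz
  have hA0 : A = 0 := by
    apply mul_left_cancel₀ (sub_ne_zero.mpr hyz)
    rw [mul_zero]; linear_combination h1 - h2
  have hB0 : B = 0 := by linear_combination h1 - (x+y)*hA0
  have hC0 : C = 0 := by linear_combination hQx - x^2*hA0 - x*hB0
  intro t
  have : A*t^2 + B*t + C = 0 := by rw [hA0, hB0, hC0]; ring
  rw [hA, hB, hC] at this
  linear_combination this

set_option maxHeartbeats 800000 in
/-- Root structure of `ψ(λ) = q` for the jump-diffusion Laplace exponent
`ψ(λ) = μλ + σ²λ²/2 − aλ/(ρ+λ)`: exactly three real solutions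
`θ₁ > 0 > θ₂ > −ρ > θ₃`, with `ψ` strictly convex on `(−ρ,∞)`,
`θ₁ = Φ(q) = sup{λ ≥ 0 : ψ(λ) = q}`, and `ψ'(θ₁) > 0`, `ψ'(θ₂) < 0`,
`ψ'(θ₃) < 0`. -/
theorem stmt_7 (μ σ a ρ q : ℝ) (hσ : 0 < σ) (ha : 0 < a) (hρ : 0 < ρ) (hq : 0 < q)
    (ψ : ℝ → ℝ)
    (hψ : ∀ l : ℝ, ψ l = μ*l + σ^2*l^2/2 - a*l/(ρ+l)) :
    ∃ θ₁ θ₂ θ₃ : ℝ,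
      0 < θ₁ ∧ θ₂ < 0 ∧ -ρ < θ₂ ∧ θ₃ < -ρ ∧
      ψ θ₁ = q ∧ ψ θ₂ = q ∧ ψ θ₃ = q ∧
      (∀ l : ℝ, l ≠ -ρ → ψ l = q → l = θ₁ ∨ l = θ₂ ∨ l = θ₃) ∧
      StrictConvexOn ℝ (Set.Ioi (-ρ)) ψ ∧
      θ₁ = sSup {l : ℝ | 0 ≤ l ∧ ψ l = q} ∧
      0 < deriv ψ θ₁ ∧ deriv ψ θ₂ < 0 ∧ deriv ψ θ₃ < 0 := by
  have hψfun : ψ = fun l : ℝ => μ*l + σ^2*l^2/2 - a*l/(ρ+l) := funext hψ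
  subst hψfun
  set f : ℝ → ℝ := fun l => (ρ+l)*(μ*l + σ^2*l^2/2 - q) - a*l with hf
  have hσ2 : (0:ℝ) < σ^2 := by positivity
  have hne : ∀ l : ℝ, l ≠ -ρ → ρ + l ≠ 0 := fun l hl h => hl (by linarith)
  have hfc : Continuous f := by fun_prop
  -- root equivalence
  have hroot : ∀ l : ℝ, l ≠ -ρ →
      ((fun l : ℝ => μ*l + σ^2*l^2/2 - a*l/(ρ+l)) l = q ↔ f l = 0) := by
    intro l hl
    have h0 : ρ + l ≠ 0 := hne l hl
    simp only [hf]
    constructor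
    · intro h
      have h' : μ*l + σ^2*l^2/2 - a*l/(ρ+l) = q := h
      field_simp at h'
      linarith [h']
    · intro h
      have : μ*l + σ^2*l^2/2 - a*l/(ρ+l) - q = ((ρ+l)*(μ*l + σ^2*l^2/2 - q) - a*l)/(ρ+l) := by
        field_simp; ring
      rw [h] at this
      simp at this
      linarith [this]
  -- values of f at special points
  have hf0 : f 0 = -(ρ*q) := by simp [hf]
  have hfρ : f (-ρ) = a*ρ := by simp [hf]
  -- root θ₂ in (-ρ, 0)
  have hivt2 : (0:ℝ) ∈ f '' Set.Ioo (-ρ) 0 := by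
    apply intermediate_value_Ioo' (by linarith) hfc.continuousOn
    rw [hf0, hfρ]
    constructor <;> nlinarith
  obtain ⟨θ₂, hθ₂mem, hfθ₂⟩ := hivt2
  obtain ⟨hθ₂l, hθ₂r⟩ := hθ₂mem
  -- root θ₁ in (0, M)
  set M : ℝ := max 1 ((2*(|μ|+q+a+1))/σ^2) with hM
  have hM1 : (1:ℝ) ≤ M := le_max_left _ _
  have hMσ : 2*(|μ|+q+a+1) ≤ σ^2*M := by
    have := le_max_right 1 ((2*(|μ|+q+a+1))/σ^2)
    calc 2*(|μ|+q+a+1) = σ^2 * ((2*(|μ|+q+a+1))/σ^2) := by field_simp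
    _ ≤ σ^2*M := by nlinarith
  have hMpos : (0:ℝ) < M := by linarith
  have habs : -|μ| ≤ μ := neg_abs_le μ
  have hfM : 0 < f M := by
    have i1 : 2*(|μ|+q+a+1)*M ≤ σ^2*M*M := mul_le_mul_of_nonneg_right hMσ (le_of_lt hMpos)
    have i2 : (-(|μ|))*M ≤ μ*M := mul_le_mul_of_nonneg_right habs (le_of_lt hMpos)
    have iq : 0 ≤ q*(M-1) := mul_nonneg (le_of_lt hq) (by linarith)
    have i3 : M*(a+1) ≤ μ*M + σ^2*M^2/2 - q := by nlinarith [i1, i2, iq]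
    have i5 : M*(M*(a+1)) ≤ (ρ+M)*(μ*M + σ^2*M^2/2 - q) := by
      apply mul_le_mul (by linarith) i3 (by nlinarith) (by nlinarith)
    have i6 : (1:ℝ)*(a+1) ≤ M*(a+1) := mul_le_mul_of_nonneg_right hM1 (by linarith)
    have i7 : M*1 ≤ M*(M*(a+1) - a) := mul_le_mul_of_nonneg_left (by linarith) (le_of_lt hMpos)
    simp only [hf]
    nlinarith [i5, i7]
  have hivt1 : (0:ℝ) ∈ f '' Set.Ioo 0 M := by
    apply intermediate_value_Ioo (le_of_lt hMpos) hfc.continuousOn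
    rw [hf0]
    constructor
    · nlinarith
    · exact hfM
  obtain ⟨θ₁, hθ₁mem, hfθ₁⟩ := hivt1
  obtain ⟨hθ₁l, hθ₁r⟩ := hθ₁mem
  -- root θ₃ in (N, -ρ)
  set t : ℝ := max 1 (max (2*ρ) ((2*(|μ|+q+2*a+1))/σ^2)) with ht
  have ht1 : (1:ℝ) ≤ t := le_max_left _ _
  have htρ : 2*ρ ≤ t := le_trans (le_max_left _ _) (le_max_right _ _)
  have htσ : 2*(|μ|+q+2*a+1) ≤ σ^2*t := by
    have h := le_trans (le_max_right (2*ρ) ((2*(|μ|+q+2*a+1))/σ^2)) (le_max_right 1 _)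
    calc 2*(|μ|+q+2*a+1) = σ^2 * ((2*(|μ|+q+2*a+1))/σ^2) := by field_simp
    _ ≤ σ^2*t := by nlinarith
  have htpos : (0:ℝ) < t := by linarith
  have hNρ : -t < -ρ := by nlinarith
  have h1 : t*(2*a+1) ≤ σ^2*t^2/2 - μ*t - q := by
    have j1 : 2*(|μ|+q+2*a+1)*t ≤ σ^2*t*t := mul_le_mul_of_nonneg_right htσ (le_of_lt htpos)
    have j2 : μ*t ≤ (|μ|)*t := mul_le_mul_of_nonneg_right (le_abs_self μ) (le_of_lt htpos)
    have jq : 0 ≤ q*(t-1) := mul_nonneg (le_of_lt hq) (by linarith)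
    nlinarith [j1, j2, jq]
  have h2 : t/2 ≤ t - ρ := by linarith
  have h3 : (t/2)*(t*(2*a+1)) ≤ (t-ρ)*(σ^2*t^2/2 - μ*t - q) := by
    apply mul_le_mul h2 h1 (by nlinarith) (by linarith)
  have h4 : 1*(t*(2*a+1)) ≤ t*(t*(2*a+1)) := by
    apply mul_le_mul_of_nonneg_right ht1 (by nlinarith)
  have hfN : f (-t) < 0 := by
    simp only [hf]
    nlinarith [h3, h4]
  have hivt3 : (0:ℝ) ∈ f '' Set.Ioo (-t) (-ρ) := by
    apply intermediate_value_Ioo (le_of_lt hNρ) hfc.continuousOn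
    rw [hfρ]
    exact ⟨hfN, by nlinarith⟩
  obtain ⟨θ₃, hθ₃mem, hfθ₃⟩ := hivt3
  obtain ⟨hθ₃l, hθ₃r⟩ := hθ₃mem
  -- basic inequalities
  have hθ₁ρ : θ₁ ≠ -ρ := by intro h; rw [h] at hθ₁l; linarith
  have hθ₂ρ : θ₂ ≠ -ρ := ne_of_gt hθ₂l
  have hθ₃ρ : θ₃ ≠ -ρ := ne_of_lt hθ₃r
  have hψθ₁ : (fun l : ℝ => μ*l + σ^2*l^2/2 - a*l/(ρ+l)) θ₁ = q := (hroot θ₁ hθ₁ρ).mpr hfθ₁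
  have hψθ₂ : (fun l : ℝ => μ*l + σ^2*l^2/2 - a*l/(ρ+l)) θ₂ = q := (hroot θ₂ hθ₂ρ).mpr hfθ₂
  have hψθ₃ : (fun l : ℝ => μ*l + σ^2*l^2/2 - a*l/(ρ+l)) θ₃ = q := (hroot θ₃ hθ₃ρ).mpr hfθ₃
  -- uniqueness via cubic factorization
  have hcoef : ∀ l : ℝ, f l = (σ^2/2)*l^3 + (μ + ρ*σ^2/2)*l^2 + (ρ*μ - q - a)*l + (-(ρ*q)) := by
    intro l; simp only [hf]; ring
  have h12 : θ₁ ≠ θ₂ := by intro h; rw [h] at hθ₁l; linarith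
  have h13 : θ₁ ≠ θ₃ := by intro h; rw [h] at hθ₁l; linarith
  have h23 : θ₂ ≠ θ₃ := by intro h; rw [h] at hθ₂l; linarith
  have hfact := cubic_factor (σ^2/2) (μ + ρ*σ^2/2) (ρ*μ - q - a) (-(ρ*q)) θ₁ θ₂ θ₃ h12 h13 h23
    (by rw [← hcoef]; exact hfθ₁) (by rw [← hcoef]; exact hfθ₂) (by rw [← hcoef]; exact hfθ₃)
  have huniq : ∀ l : ℝ, l ≠ -ρ → (fun l : ℝ => μ*l + σ^2*l^2/2 - a*l/(ρ+l)) l = q →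
      l = θ₁ ∨ l = θ₂ ∨ l = θ₃ := by
    intro l hl hlq
    have hfl : f l = 0 := (hroot l hl).mp hlq
    rw [hcoef] at hfl
    rw [hfact l] at hfl
    have hc3 : σ^2/2 ≠ 0 := by positivity
    rcases mul_eq_zero.mp hfl with h | h
    · rcases mul_eq_zero.mp h with h' | h'
      · rcases mul_eq_zero.mp h' with h'' | h''
        · exact absurd h'' hc3
        · left; linarith [sub_eq_zero.mp h'']
      · right; left; linarith [sub_eq_zero.mp h']
    · right; right; linarith [sub_eq_zero.mp h]
  -- derivatives
  have hD : ∀ l : ℝ, l ≠ -ρ →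
      HasDerivAt (fun l : ℝ => μ*l + σ^2*l^2/2 - a*l/(ρ+l)) (μ + σ^2*l - a*ρ/(ρ+l)^2) l := by
    intro l hl
    have h0 : ρ + l ≠ 0 := hne l hl
    have h1 : HasDerivAt (fun x : ℝ => μ*x + σ^2*x^2/2) (μ + σ^2*l) l := by
      have := ((hasDerivAt_id l).const_mul μ).add
        (((hasDerivAt_pow 2 l).const_mul (σ^2)).div_const 2)
      refine this.congr_deriv ?_
      ring
    have hn : HasDerivAt (fun x : ℝ => a*x) a l := by
      simpa using (hasDerivAt_id l).const_mul a
    have hd : HasDerivAt (fun x : ℝ => ρ+x) 1 l := by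
      simpa using (hasDerivAt_id l).const_add ρ
    have h2 : HasDerivAt (fun x : ℝ => a*x/(ρ+x)) (a*ρ/(ρ+l)^2) l := by
      have := hn.div hd h0
      refine this.congr_deriv ?_
      field_simp
      ring
    exact h1.sub h2
  have hderiv_eq : ∀ l : ℝ, l ≠ -ρ →
      deriv (fun l : ℝ => μ*l + σ^2*l^2/2 - a*l/(ρ+l)) l = μ + σ^2*l - a*ρ/(ρ+l)^2 :=
    fun l hl => (hD l hl).deriv
  have hD2 : ∀ l : ℝ, l ≠ -ρ →
      HasDerivAt (fun x : ℝ => μ + σ^2*x - a*ρ/(ρ+x)^2) (σ^2 + 2*a*ρ/(ρ+l)^3) l := by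
    intro l hl
    have h0 : ρ + l ≠ 0 := hne l hl
    have h0' : (ρ+l)^2 ≠ 0 := pow_ne_zero 2 h0
    have h1 : HasDerivAt (fun x : ℝ => μ + σ^2*x) (σ^2) l := by
      simpa using ((hasDerivAt_id l).const_mul (σ^2)).const_add μ
    have hden : HasDerivAt (fun x : ℝ => (ρ+x)^2) (2*(ρ+l)) l := by
      have := ((hasDerivAt_id' l).const_add ρ).pow 2
      refine this.congr_deriv ?_
      norm_num
    have h2 : HasDerivAt (fun x : ℝ => a*ρ/(ρ+x)^2) (-(2*a*ρ/(ρ+l)^3)) l := by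
      have := (hasDerivAt_const l (a*ρ)).div hden h0'
      refine this.congr_deriv ?_
      field_simp
      ring
    have := h1.sub h2
    refine this.congr_deriv ?_
    ring
  -- strict convexity
  have hconv : StrictConvexOn ℝ (Set.Ioi (-ρ)) (fun l : ℝ => μ*l + σ^2*l^2/2 - a*l/(ρ+l)) := by
    apply strictConvexOn_of_deriv2_pos (convex_Ioi _)
    · intro x hx
      have hx' : x ≠ -ρ := ne_of_gt hx
      exact (hD x hx').continuousAt.continuousWithinAt
    · intro x hx
      rw [interior_Ioi] at hx
      have hx' : x ≠ -ρ := ne_of_gt hx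
      have hEv : deriv (fun l : ℝ => μ*l + σ^2*l^2/2 - a*l/(ρ+l)) =ᶠ[nhds x]
          (fun x : ℝ => μ + σ^2*x - a*ρ/(ρ+x)^2) := by
        filter_upwards [IsOpen.mem_nhds isOpen_compl_singleton hx'] with y hy
        exact hderiv_eq y hy
      have : deriv^[2] (fun l : ℝ => μ*l + σ^2*l^2/2 - a*l/(ρ+l)) x
          = σ^2 + 2*a*ρ/(ρ+x)^3 := by
        show deriv (deriv (fun l : ℝ => μ*l + σ^2*l^2/2 - a*l/(ρ+l))) x = _
        rw [hEv.deriv_eq]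
        exact (hD2 x hx').deriv
      rw [this]
      have hpx : (0:ℝ) < ρ + x := by rw [Set.mem_Ioi] at hx; linarith
      have : (0:ℝ) < 2*a*ρ/(ρ+x)^3 := div_pos (by positivity) (by positivity)
      linarith
  -- key derivative identity at roots
  have hkey : ∀ θ : ℝ, θ ≠ 0 → θ ≠ -ρ →
      (fun l : ℝ => μ*l + σ^2*l^2/2 - a*l/(ρ+l)) θ = q →
      deriv (fun l : ℝ => μ*l + σ^2*l^2/2 - a*l/(ρ+l)) θ
        = q/θ + σ^2*θ/2 + a*θ/(ρ+θ)^2 := by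
    intro θ h0 hρ' hqθ
    have h0' : ρ + θ ≠ 0 := hne θ hρ'
    have hq'' : μ*θ + σ^2*θ^2/2 - a*θ/(ρ+θ) = q := hqθ
    have hqdiv : q/θ = μ + σ^2*θ/2 - a/(ρ+θ) := by
      rw [← hq'']; field_simp
    rw [hderiv_eq θ hρ', hqdiv]
    field_simp
    ring
  -- derivative signs
  have hdθ₁ : 0 < deriv (fun l : ℝ => μ*l + σ^2*l^2/2 - a*l/(ρ+l)) θ₁ := by
    rw [hkey θ₁ (ne_of_gt hθ₁l) hθ₁ρ hψθ₁]
    have t1 : 0 < q/θ₁ := div_pos hq hθ₁l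
    have t2 : 0 < σ^2*θ₁/2 := by positivity
    have t3 : 0 < a*θ₁/(ρ+θ₁)^2 := div_pos (by positivity) (pow_pos (by linarith) 2)
    linarith
  have hdθ₂ : deriv (fun l : ℝ => μ*l + σ^2*l^2/2 - a*l/(ρ+l)) θ₂ < 0 := by
    rw [hkey θ₂ (ne_of_lt hθ₂r) hθ₂ρ hψθ₂]
    have t1 : q/θ₂ < 0 := div_neg_of_pos_of_neg hq hθ₂r
    have t2 : σ^2*θ₂/2 < 0 := by
      have := mul_neg_of_pos_of_neg hσ2 hθ₂r; linarith
    have t3 : a*θ₂/(ρ+θ₂)^2 < 0 :=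
      div_neg_of_neg_of_pos (mul_neg_of_pos_of_neg ha hθ₂r) (pow_pos (by linarith) 2)
    linarith
  have hdθ₃ : deriv (fun l : ℝ => μ*l + σ^2*l^2/2 - a*l/(ρ+l)) θ₃ < 0 := by
    have hθ₃0 : θ₃ < 0 := by linarith
    rw [hkey θ₃ (ne_of_lt hθ₃0) hθ₃ρ hψθ₃]
    have t1 : q/θ₃ < 0 := div_neg_of_pos_of_neg hq hθ₃0
    have t2 : σ^2*θ₃/2 < 0 := by
      have := mul_neg_of_pos_of_neg hσ2 hθ₃0; linarith
    have hρθ : ρ+θ₃ < 0 := by linarith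
    have hsq : (0:ℝ) < (ρ+θ₃)^2 := by
      have := mul_pos (neg_pos.mpr hρθ) (neg_pos.mpr hρθ)
      calc (0:ℝ) < (-(ρ+θ₃))*(-(ρ+θ₃)) := this
      _ = (ρ+θ₃)^2 := by ring
    have t3 : a*θ₃/(ρ+θ₃)^2 < 0 :=
      div_neg_of_neg_of_pos (mul_neg_of_pos_of_neg ha hθ₃0) hsq
    linarith
  -- sSup
  have hset : {l : ℝ | 0 ≤ l ∧ (fun l : ℝ => μ*l + σ^2*l^2/2 - a*l/(ρ+l)) l = q} = {θ₁} := by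
    ext l
    simp only [Set.mem_setOf_eq, Set.mem_singleton_iff]
    constructor
    · rintro ⟨hl0, hlq⟩
      have hl' : l ≠ -ρ := by intro h; rw [h] at hl0; linarith
      rcases huniq l hl' hlq with h | h | h
      · exact h
      · exfalso; rw [h] at hl0; linarith
      · exfalso; rw [h] at hl0; linarith
    · rintro rfl
      exact ⟨le_of_lt hθ₁l, hψθ₁⟩
  refine ⟨θ₁, θ₂, θ₃, hθ₁l, hθ₂r, hθ₂l, hθ₃r, hψθ₁, hψθ₂, hψθ₃, huniq, hconv, ?_, hdθ₁, hdθ₂, hdθ₃⟩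
  rw [hset, csSup_singleton]
end

section
/- Let μ ∈ ℝ, σ > 0, a > 0, ρ > 0, q > 0, define ψ(λ) = μλ + (1/2)σ²λ² − aλ/(ρ + λ), and let θ₁ > 0 > θ₂ > −ρ > θ₃ be the three distinct real solutions of ψ(λ) = q. Define W : [0,∞) → ℝ by W(x) = e^{θ₁x}/ψ'(θ₁) + e^{θ₂x}/ψ'(θ₂) + e^{θ₃x}/ψ'(θ₃). Then for every β > θ₁, ∫_0^∞ e^{−βx} W(x) dx = 1/(ψ(β) − q). -/
open MeasureTheory Real

private lemma integral_exp_neg_mul {c : ℝ} (hc : 0 < c) :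
    ∫ x in Set.Ioi (0:ℝ), Real.exp (-c*x) = 1/c := by
  have hderiv : ∀ x ∈ Set.Ici (0:ℝ), HasDerivAt (fun y => -Real.exp (-c*y)/c) (Real.exp (-c*x)) x := by
    intro x _
    have hg : HasDerivAt (fun y : ℝ => -c*y) (-c) x := by
      simpa using (hasDerivAt_id x).const_mul (-c)
    have h : HasDerivAt (fun y => Real.exp (-c*y)) (Real.exp (-c*x) * (-c)) x := hg.exp
    refine (h.neg.div_const c).congr_deriv ?_
    field_simp
  have hint : IntegrableOn (fun x => Real.exp (-c*x)) (Set.Ioi (0:ℝ)) :=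
    exp_neg_integrableOn_Ioi 0 hc
  have htend : Filter.Tendsto (fun x => -Real.exp (-c*x)/c) Filter.atTop (nhds 0) := by
    have h1 : Filter.Tendsto (fun x : ℝ => c * x) Filter.atTop Filter.atTop :=
      Filter.tendsto_id.const_mul_atTop hc
    have h2 : Filter.Tendsto (fun x : ℝ => Real.exp (-(c*x))) Filter.atTop (nhds 0) :=
      Real.tendsto_exp_neg_atTop_nhds_zero.comp h1
    have h3 : Filter.Tendsto (fun x : ℝ => -Real.exp (-(c*x))/c) Filter.atTop (nhds (-0/c)) :=
      (h2.neg).div_const c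
    simpa [neg_mul] using h3
  have := integral_Ioi_of_hasDerivAt_of_tendsto' hderiv hint htend
  rw [this]
  field_simp
  simp

set_option maxHeartbeats 1600000 in
/-- Laplace transform of the explicit three-exponential `q`-scale function
`W(x) = Σᵢ e^{θᵢx}/ψ'(θᵢ)` for the jump diffusion:
`∫₀^∞ e^{−βx} W(x) dx = 1/(ψ(β) − q)` for every `β > θ₁`. -/
theorem stmt_11 (μ σ a ρ q : ℝ) (hσ : 0 < σ) (ha : 0 < a) (hρ : 0 < ρ) (hq : 0 < q)
    (ψ : ℝ → ℝ)
    (hψ : ∀ l : ℝ, ψ l = μ*l + σ^2*l^2/2 - a*l/(ρ+l))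
    (θ₁ θ₂ θ₃ : ℝ)
    (h1 : 0 < θ₁) (h2 : θ₂ < 0) (h2' : -ρ < θ₂) (h3 : θ₃ < -ρ)
    (hq1 : ψ θ₁ = q) (hq2 : ψ θ₂ = q) (hq3 : ψ θ₃ = q)
    (W : ℝ → ℝ)
    (hW : ∀ x : ℝ, W x = Real.exp (θ₁*x) / deriv ψ θ₁
      + Real.exp (θ₂*x) / deriv ψ θ₂ + Real.exp (θ₃*x) / deriv ψ θ₃) :
    ∀ β : ℝ, θ₁ < β →
      ∫ x in Set.Ioi (0:ℝ), Real.exp (-β*x) * W x = 1/(ψ β - q) := by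
  intro β hβ
  have hr1 : ρ + θ₁ ≠ 0 := by positivity
  have hr2 : ρ + θ₂ ≠ 0 := by intro h; linarith [h2']
  have hr3 : ρ + θ₃ ≠ 0 := by intro h; linarith [h3]
  have hrβ : ρ + β ≠ 0 := by intro h; linarith
  -- cleared root equations
  have P1 : μ*θ₁*(ρ+θ₁) + σ^2*θ₁^2/2*(ρ+θ₁) - a*θ₁ = q*(ρ+θ₁) := by
    have h := hq1; rw [hψ] at h; field_simp at h; linear_combination h/2
  have P2 : μ*θ₂*(ρ+θ₂) + σ^2*θ₂^2/2*(ρ+θ₂) - a*θ₂ = q*(ρ+θ₂) := by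
    have h := hq2; rw [hψ] at h; field_simp at h; linear_combination h/2
  have P3 : μ*θ₃*(ρ+θ₃) + σ^2*θ₃^2/2*(ρ+θ₃) - a*θ₃ = q*(ρ+θ₃) := by
    have h := hq3; rw [hψ] at h; field_simp at h; linear_combination h/2
  have h12 : θ₁ - θ₂ ≠ 0 := sub_ne_zero.mpr (by linarith)
  have h13 : θ₁ - θ₃ ≠ 0 := sub_ne_zero.mpr (by linarith)
  have h23 : θ₂ - θ₃ ≠ 0 := sub_ne_zero.mpr (by linarith)
  -- elementary symmetric function relations
  have Q12 : σ^2/2*(θ₁^2+θ₁*θ₂+θ₂^2) + (μ+σ^2/2*ρ)*(θ₁+θ₂) + (μ*ρ-a-q) = 0 := by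
    apply mul_left_cancel₀ h12
    linear_combination P1 - P2
  have Q23 : σ^2/2*(θ₂^2+θ₂*θ₃+θ₃^2) + (μ+σ^2/2*ρ)*(θ₂+θ₃) + (μ*ρ-a-q) = 0 := by
    apply mul_left_cancel₀ h23
    linear_combination P2 - P3
  have hA : σ^2/2*(θ₁+θ₂+θ₃) + (μ+σ^2/2*ρ) = 0 := by
    apply mul_left_cancel₀ h13
    linear_combination Q12 - Q23
  have hB : σ^2/2*(θ₁*θ₂+θ₁*θ₃+θ₂*θ₃) - (μ*ρ-a-q) = 0 := by
    linear_combination (θ₁+θ₂)*hA - Q12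
  have hC : σ^2/2*(θ₁*θ₂*θ₃) - q*ρ = 0 := by
    linear_combination P1 - θ₁^2*hA + θ₁*hB
  -- factorization of ψ - q
  have hfac : ∀ l : ℝ, ρ + l ≠ 0 →
      ψ l - q = σ^2/2*(l-θ₁)*(l-θ₂)*(l-θ₃)/(ρ+l) := by
    intro l hl
    rw [hψ, eq_div_iff hl]
    field_simp
    linear_combination 2*(l^2*hA - l*hB + hC)
  -- derivative of ψ
  have hder : ∀ θ : ℝ, ρ + θ ≠ 0 → HasDerivAt ψ (μ + σ^2*θ - a*ρ/(ρ+θ)^2) θ := by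
    intro θ hθ
    have hψfun : ψ = fun l => μ*l + σ^2*l^2/2 - a*l/(ρ+l) := funext hψ
    rw [hψfun]
    have hu : HasDerivAt (fun l : ℝ => a*l) a θ := by simpa using (hasDerivAt_id θ).const_mul a
    have hv : HasDerivAt (fun l : ℝ => ρ+l) 1 θ := by simpa using (hasDerivAt_id θ).const_add ρ
    have hdiv : HasDerivAt (fun l : ℝ => a*l/(ρ+l)) ((a*(ρ+θ) - a*θ*1)/(ρ+θ)^2) θ := hu.div hv hθ
    have hm : HasDerivAt (fun l : ℝ => μ*l) μ θ := by simpa using (hasDerivAt_id θ).const_mul μ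
    have hsq : HasDerivAt (fun l : ℝ => σ^2*l^2/2) (σ^2*θ) θ := by
      have h := ((hasDerivAt_pow 2 θ).const_mul (σ^2)).div_const 2
      refine h.congr_deriv ?_
      ring
    refine ((hm.add hsq).sub hdiv).congr_deriv ?_
    field_simp
    ring
  -- values of the derivative at the roots
  have key1 : (μ + σ^2*θ₁)*(ρ+θ₁)^2 - a*ρ = σ^2/2*(θ₁-θ₂)*(θ₁-θ₃)*(ρ+θ₁) := by
    linear_combination (2*θ₁*(ρ+θ₁))*hA - (ρ+θ₁)*hB - P1
  have key2 : (μ + σ^2*θ₂)*(ρ+θ₂)^2 - a*ρ = σ^2/2*(θ₂-θ₁)*(θ₂-θ₃)*(ρ+θ₂) := by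
    linear_combination (2*θ₂*(ρ+θ₂))*hA - (ρ+θ₂)*hB - P2
  have key3 : (μ + σ^2*θ₃)*(ρ+θ₃)^2 - a*ρ = σ^2/2*(θ₃-θ₁)*(θ₃-θ₂)*(ρ+θ₃) := by
    linear_combination (2*θ₃*(ρ+θ₃))*hA - (ρ+θ₃)*hB - P3
  have d1 : deriv ψ θ₁ = σ^2/2*(θ₁-θ₂)*(θ₁-θ₃)/(ρ+θ₁) := by
    rw [(hder θ₁ hr1).deriv, eq_div_iff hr1]
    field_simp
    linear_combination 2*key1
  have d2 : deriv ψ θ₂ = σ^2/2*(θ₂-θ₁)*(θ₂-θ₃)/(ρ+θ₂) := by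
    rw [(hder θ₂ hr2).deriv, eq_div_iff hr2]
    field_simp
    linear_combination 2*key2
  have d3 : deriv ψ θ₃ = σ^2/2*(θ₃-θ₁)*(θ₃-θ₂)/(ρ+θ₃) := by
    rw [(hder θ₃ hr3).deriv, eq_div_iff hr3]
    field_simp
    linear_combination 2*key3
  -- positivity facts
  have hc1 : 0 < β - θ₁ := by linarith
  have hc2 : 0 < β - θ₂ := by linarith
  have hc3 : 0 < β - θ₃ := by linarith
  set D₁ := deriv ψ θ₁ with hD1
  set D₂ := deriv ψ θ₂ with hD2
  set D₃ := deriv ψ θ₃ with hD3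
  -- pointwise rewriting of the integrand
  have hpt : ∀ x : ℝ, Real.exp (-β*x) * W x
      = Real.exp (-((β-θ₁)*x))/D₁ + Real.exp (-((β-θ₂)*x))/D₂ + Real.exp (-((β-θ₃)*x))/D₃ := by
    intro x
    rw [hW x, mul_add, mul_add, ← mul_div_assoc, ← mul_div_assoc, ← mul_div_assoc,
      ← Real.exp_add, ← Real.exp_add, ← Real.exp_add]
    ring_nf
  have hi1 : IntegrableOn (fun x => Real.exp (-((β-θ₁)*x))/D₁) (Set.Ioi (0:ℝ)) :=
    by have h := (exp_neg_integrableOn_Ioi 0 hc1).div_const D₁; simp only [neg_mul] at h; exact h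
  have hi2 : IntegrableOn (fun x => Real.exp (-((β-θ₂)*x))/D₂) (Set.Ioi (0:ℝ)) :=
    by have h := (exp_neg_integrableOn_Ioi 0 hc2).div_const D₂; simp only [neg_mul] at h; exact h
  have hi3 : IntegrableOn (fun x => Real.exp (-((β-θ₃)*x))/D₃) (Set.Ioi (0:ℝ)) :=
    by have h := (exp_neg_integrableOn_Ioi 0 hc3).div_const D₃; simp only [neg_mul] at h; exact h
  have hval : ∀ (c d : ℝ), 0 < c → (∫ x in Set.Ioi (0:ℝ), Real.exp (-(c*x))/d) = 1/(c*d) := by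
    intro c d hc
    have : (∫ x in Set.Ioi (0:ℝ), Real.exp (-(c*x))/d)
        = (∫ x in Set.Ioi (0:ℝ), Real.exp (-c*x))/d := by
      rw [integral_div]; simp [neg_mul]
    rw [this, integral_exp_neg_mul hc, div_div]
  calc ∫ x in Set.Ioi (0:ℝ), Real.exp (-β*x) * W x
      = ∫ x in Set.Ioi (0:ℝ), (Real.exp (-((β-θ₁)*x))/D₁ + Real.exp (-((β-θ₂)*x))/D₂
          + Real.exp (-((β-θ₃)*x))/D₃) :=
        setIntegral_congr_fun measurableSet_Ioi (fun x _ => hpt x)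
    _ = 1/((β-θ₁)*D₁) + 1/((β-θ₂)*D₂) + 1/((β-θ₃)*D₃) := by
        have hi12 : IntegrableOn (fun x => Real.exp (-((β-θ₁)*x))/D₁
            + Real.exp (-((β-θ₂)*x))/D₂) (Set.Ioi (0:ℝ)) := hi1.add hi2
        rw [integral_add hi12 hi3, integral_add hi1 hi2,
          hval _ _ hc1, hval _ _ hc2, hval _ _ hc3]
    _ = 1/(ψ β - q) := by
        rw [hfac β hrβ, d1, d2, d3]
        have hb1 : β - θ₁ ≠ 0 := ne_of_gt hc1
        have hb2 : β - θ₂ ≠ 0 := ne_of_gt hc2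
        have hb3 : β - θ₃ ≠ 0 := ne_of_gt hc3
        have hσ' : σ ≠ 0 := ne_of_gt hσ
        have h21 : θ₂ - θ₁ ≠ 0 := fun h => h12 (by linarith [sub_eq_zero.mp h])
        have h31 : θ₃ - θ₁ ≠ 0 := fun h => h13 (by linarith [sub_eq_zero.mp h])
        have h32 : θ₃ - θ₂ ≠ 0 := fun h => h23 (by linarith [sub_eq_zero.mp h])
        field_simp
        ring
end
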